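/- For any concave, non-decreasing function s : ℝ₊ → ℝ₊ with s(1) = 1 and s(k) = k for k ≤ 1, the function i ↦ i · s(n/i) is strictly increasing in i for 0 < i < n, and is constant (equal to n) for i ≥ n. -/

import Mathlib

/-- For a concave, non-decreasing speedup function `s` with `s k = k` for `k ≤ 1`
(so in particular `s 1 = 1`) and `s k < k` for `k > 1`, the function
`i ↦ i * s (n / i)` is strictly increasing on `(0, n)` and constantly `n` on `[n, ∞)`. -/
theorem stmt0 (n : ℝ) (hn : 0 < n) (s : ℝ → ℝ)
    (hconc : ConcaveOn ℝ (Set.Ici (0:ℝ)) s)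
    (hmono : MonotoneOn s (Set.Ici (0:ℝ)))
    (hlow : ∀ k : ℝ, 0 ≤ k → k ≤ 1 → s k = k)
    (hsub : ∀ k : ℝ, 1 < k → s k < k) :
    StrictMonoOn (fun i : ℝ => i * s (n / i)) (Set.Ioo 0 n) ∧
      ∀ i : ℝ, n ≤ i → i * s (n / i) = n := by
  constructor
  · intro a ha b hb hab
    obtain ⟨ha0, han⟩ := ha
    obtain ⟨hb0, hbn⟩ := hb
    set x := n / a with hxdef
    set y := n / b with hydef
    have hx1 : 1 < x := (one_lt_div ha0).mpr han
    have hy1 : 1 < y := (one_lt_div hb0).mpr hbn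
    have hyx : y < x := by
      rw [hxdef, hydef]
      exact div_lt_div_of_pos_left hn ha0 hab
    have hx1' : (0:ℝ) < x - 1 := by linarith
    set t := (x - y) / (x - 1) with ht
    have ht0 : 0 ≤ t := by
      apply div_nonneg <;> linarith
    have ht0' : 0 ≤ 1 - t := by
      rw [ht, sub_nonneg, div_le_one hx1']; linarith
    have hcomb : t • (1:ℝ) + (1 - t) • x = y := by
      simp only [smul_eq_mul, ht]
      field_simp
      ring
    have h1 : s 1 = 1 := hlow 1 zero_le_one le_rfl
    have hkey := hconc.2 (Set.mem_Ici.mpr zero_le_one)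
      (Set.mem_Ici.mpr (by linarith : (0:ℝ) ≤ x)) ht0 ht0' (by ring)
    rw [hcomb] at hkey
    simp only [smul_eq_mul, h1] at hkey
    have hsx : s x < x := hsub x hx1
    have htpos : 0 < t := by
      apply div_pos <;> linarith
    have hteq : t * (x - 1) = x - y := by
      rw [ht]; field_simp
    have hmain : y * s x < x * s y := by
      have h2 := mul_le_mul_of_nonneg_left hkey (by linarith : (0:ℝ) ≤ x)
      have h3 : (x - y) * s x = t * (x - 1) * s x := by rw [hteq]
      nlinarith [h2, h3, mul_pos htpos (show (0:ℝ) < x - s x by linarith)]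
    have hax : a * x = n := by rw [hxdef]; field_simp
    have hby : b * y = n := by rw [hydef]; field_simp
    have hxy : (0:ℝ) < x * y := by positivity
    have e1 : a * s x * (x * y) = n * (y * s x) := by rw [← hax]; ring
    have e2 : b * s y * (x * y) = n * (x * s y) := by rw [← hby]; ring
    have : a * s x * (x * y) < b * s y * (x * y) := by
      rw [e1, e2]
      exact mul_lt_mul_of_pos_left hmain hn
    exact (mul_lt_mul_iff_of_pos_right hxy).mp this
  · intro i hi
    have hi0 : 0 < i := lt_of_lt_of_le hn hi
    have hs : s (n / i) = n / i := hlow _ (by positivity) ((div_le_one hi0).mpr hi)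
    rw [hs]
    field_simp
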